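/- arXiv:1112.1450 — 2 statements merged into one kernel-verified Lean document; each statement's English description precedes it below -/
import Mathlib

section
/- There exists an absolute constant C > 0 such that for every 0 < p ≤ 1, every d with M = 2^d ≥ 4, and every sample size n with n ≥ M^{2/p}, the minimax risk over F^{+,1}_d(p) for estimation from n i.i.d. samples satisfies inf_{f̂_n} sup_{f ∈ F^{+,1}_d(p)} E_f ‖f̂_n − f‖²_{L²(μ_d)} ≥ C/n, where the infimum is over all estimators f̂_n, i.e., all measurable maps from ({0,1}^d)^n to L²(μ_d) applied to the sample X_1,…,X_n. -/
open scoped BigOperators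

namespace RWT

/-- The binary hypercube `{0,1}^d`, modeled as functions `Fin d → Bool`. -/
abbrev Cube (d : ℕ) := Fin d → Bool

/-- The dot product `s · x = ∑_j s_j x_j` of two binary strings (as a natural number). -/
def dotc {k : ℕ} (s x : Cube k) : ℕ :=
  (Finset.univ.filter fun j => s j = true ∧ x j = true).card

/-- The Walsh function `χ_s(x) = 2^{-k/2} (-1)^{s·x}` on `{0,1}^k`. -/
noncomputable def walsh {k : ℕ} (s x : Cube k) : ℝ :=
  (-1 : ℝ) ^ dotc s x / Real.sqrt (2 ^ k)

/-- The inner product `⟨f,g⟩ = ∑_x f(x) g(x)` of `L²(μ_k)` (counting measure). -/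
noncomputable def ip {k : ℕ} (f g : Cube k → ℝ) : ℝ := ∑ x : Cube k, f x * g x

/-- The Fourier–Walsh coefficient `θ_s = ⟨f, χ_s⟩`. -/
noncomputable def theta {d : ℕ} (f : Cube d → ℝ) (s : Cube d) : ℝ := ip f (walsh s)

/-- The prefix map `π_k : {0,1}^d → {0,1}^k`. -/
def pref {d : ℕ} (k : ℕ) (h : k ≤ d) (x : Cube d) : Cube k :=
  fun j => x (Fin.castLE h j)

/-- The suffix map `σ_k : {0,1}^d → {0,1}^{d-k}`. -/
def suff {d : ℕ} (k : ℕ) (h : k ≤ d) (x : Cube d) : Cube (d - k) :=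
  fun j => x ⟨k + j.val, by have := j.isLt; omega⟩

/-- Concatenation of `u ∈ {0,1}^k` and `v ∈ {0,1}^{d-k}` into a string in `{0,1}^d`. -/
def concat {d k : ℕ} (h : k ≤ d) (u : Cube k) (v : Cube (d - k)) : Cube d :=
  fun i => if hi : i.val < k then u ⟨i.val, hi⟩ else v ⟨i.val - k, by have := i.isLt; omega⟩

/-- `f` is a probability density on `{0,1}^d` w.r.t. the counting measure. -/
def IsDensity {d : ℕ} (f : Cube d → ℝ) : Prop :=
  (∀ x, 0 ≤ f x) ∧ ∑ x : Cube d, f x = 1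

/-- Membership of the coefficient vector `θ` in the weak-`ℓ^p` ball of radius `R`:
the decreasing rearrangement of `|θ|` satisfies `|θ_{(m)}| ≤ R m^{-1/p}` for `1 ≤ m ≤ 2^d`. -/
def wlp (d : ℕ) (p R : ℝ) (θ : Cube d → ℝ) : Prop :=
  ∃ e : Fin (2 ^ d) ≃ Cube d,
    (∀ i j : Fin (2 ^ d), i ≤ j → |θ (e j)| ≤ |θ (e i)|) ∧
    ∀ m : Fin (2 ^ d), |θ (e m)| ≤ R * ((m.val : ℝ) + 1) ^ (-(1 / p))

/-- The sparsity class `F_d(p) = {f : θ(f) ∈ wℓ^p(1/√M)}`, `M = 2^d`. -/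
def Fclass (d : ℕ) (p : ℝ) : Set (Cube d → ℝ) :=
  {f | wlp d p (1 / Real.sqrt (2 ^ d)) (theta f)}

/-- The class `F^{+,1}_d(p)` of probability densities in `F_d(p)`. -/
def FclassDens (d : ℕ) (p : ℝ) : Set (Cube d → ℝ) :=
  {f | f ∈ Fclass d p ∧ IsDensity f}

/-- Empirical Fourier–Walsh coefficient `θ̂_s = (1/n) ∑_i χ_s(x_i)`. -/
noncomputable def thetaHat {d n : ℕ} (xs : Fin n → Cube d) (s : Cube d) : ℝ :=
  (1 / (n : ℝ)) * ∑ i, walsh s (xs i)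

/-- The weight estimate
`Ŵ_u = (1/n²) ∑_i ∑_j χ_u(π_k(x_i)) χ_u(π_k(x_j)) 1{σ_k(x_i) = σ_k(x_j)}`. -/
noncomputable def What {d : ℕ} (k : ℕ) (h : k ≤ d) {n : ℕ} (xs : Fin n → Cube d)
    (u : Cube k) : ℝ :=
  (1 / (n : ℝ) ^ 2) * ∑ i, ∑ j,
    walsh u (pref k h (xs i)) * walsh u (pref k h (xs j)) *
      (if suff k h (xs i) = suff k h (xs j) then (1 : ℝ) else 0)

/-- `f_u = ∑_{v ∈ {0,1}^{d-k}} θ_{uv} χ_v ∈ L²(μ_{d-k})`. -/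
noncomputable def fu {d : ℕ} (k : ℕ) (h : k ≤ d) (f : Cube d → ℝ) (u : Cube k) :
    Cube (d - k) → ℝ :=
  fun y => ∑ v : Cube (d - k), theta f (concat h u v) * walsh v y

/-- The empirical counterpart `f̂_u = ∑_v θ̂_{uv} χ_v`. -/
noncomputable def fuHat {d n : ℕ} (k : ℕ) (h : k ≤ d) (xs : Fin n → Cube d) (u : Cube k) :
    Cube (d - k) → ℝ :=
  fun y => ∑ v : Cube (d - k), thetaHat xs (concat h u v) * walsh v y

/-- The weight `W_u = ∑_v θ_{uv}²`. -/
noncomputable def Wu {d : ℕ} (k : ℕ) (h : k ≤ d) (f : Cube d → ℝ) (u : Cube k) : ℝ :=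
  ∑ v : Cube (d - k), (theta f (concat h u v)) ^ 2

/-- The empirical weight `Ŵ_u = ∑_v θ̂_{uv}²` (in direct form). -/
noncomputable def WuHat {d n : ℕ} (k : ℕ) (h : k ≤ d) (xs : Fin n → Cube d) (u : Cube k) : ℝ :=
  ∑ v : Cube (d - k), (thetaHat xs (concat h u v)) ^ 2

/-- The recursive Walsh thresholding estimator
`f̂_RWT = ∑_{s ∈ A(λ)} θ̂_s χ_s`, where
`A(λ) = {s : Ŵ_{π_k(s)} ≥ λ_k for all 1 ≤ k ≤ d}`. -/
noncomputable def fRWT {d n : ℕ} (lam : ℕ → ℝ) (xs : Fin n → Cube d) : Cube d → ℝ :=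
  fun x => ∑ s : Cube d,
    Set.indicator
      {s' : Cube d | ∀ k, ∀ hk : k ≤ d, 1 ≤ k → lam k ≤ What k hk xs (pref k hk s')}
      (fun s' => thetaHat xs s') s * walsh s x

/-- Expectation over an i.i.d. sample `X_1, …, X_n` drawn from the density `f`:
`E_f[g(X₁,…,Xₙ)] = ∑_{x₁,…,xₙ} (∏_i f(xᵢ)) g(x₁,…,xₙ)`. -/
noncomputable def expSample {d n : ℕ} (f : Cube d → ℝ) (g : (Fin n → Cube d) → ℝ) : ℝ :=
  ∑ xs : Fin n → Cube d, (∏ i, f (xs i)) * g xs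

/-- The packing family `F(k,a)`: densities whose Walsh coefficient at the lexicographically
first string `s₁ = (0,…,0)` equals `1/√M`, and whose remaining `M-1` coefficients have exactly
`k` nonzero entries, each equal to `a` or `-a`. -/
def Fka (d k : ℕ) (a : ℝ) : Set (Cube d → ℝ) :=
  {f | theta f (fun _ => false) = 1 / Real.sqrt (2 ^ d) ∧
       (∀ s : Cube d, s ≠ (fun _ => false) →
          theta f s = 0 ∨ theta f s = a ∨ theta f s = -a) ∧
       {s : Cube d | s ≠ (fun _ => false) ∧ theta f s ≠ 0}.ncard = k}



section Aux

variable {k : ℕ}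

lemma walsh_eq_prod (s x : Cube k) :
    walsh s x = (∏ j, (if s j = true ∧ x j = true then (-1:ℝ) else 1)) / Real.sqrt (2 ^ k) := by
  unfold walsh dotc
  congr 1
  rw [← Finset.prod_const (b := (-1:ℝ)), Finset.prod_filter]

lemma walsh_ortho (s t : Cube k) :
    ∑ x : Cube k, walsh s x * walsh t x = if s = t then (1:ℝ) else 0 := by
  have h2 : (0:ℝ) < 2 ^ k := by positivity
  have hs : Real.sqrt (2 ^ k) * Real.sqrt (2 ^ k) = 2 ^ k := Real.mul_self_sqrt h2.le
  have key : ∀ x : Cube k, walsh s x * walsh t x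
      = (∏ j, ((if s j = true ∧ x j = true then (-1:ℝ) else 1) *
               (if t j = true ∧ x j = true then (-1:ℝ) else 1))) / 2 ^ k := by
    intro x
    rw [walsh_eq_prod, walsh_eq_prod, div_mul_div_comm, hs, Finset.prod_mul_distrib]
  simp only [key, ← Finset.sum_div]
  have hfact : (∑ x : Cube k, ∏ j, ((if s j = true ∧ x j = true then (-1:ℝ) else 1) *
               (if t j = true ∧ x j = true then (-1:ℝ) else 1)))
      = ∏ j, ∑ b : Bool, ((if s j = true ∧ b = true then (-1:ℝ) else 1) *
               (if t j = true ∧ b = true then (-1:ℝ) else 1)) := (Fintype.prod_sum (κ := fun _ : Fin k => Bool) (fun j b => (if s j = true ∧ b = true then (-1:ℝ) else 1) * (if t j = true ∧ b = true then (-1:ℝ) else 1))).symm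
  rw [hfact]
  have hb : ∀ j, (∑ b : Bool, ((if s j = true ∧ b = true then (-1:ℝ) else 1) *
               (if t j = true ∧ b = true then (-1:ℝ) else 1))) = if s j = t j then 2 else 0 := by
    intro j
    cases hsj : s j <;> cases htj : t j <;> simp [Fintype.sum_bool, hsj, htj] <;> norm_num
  rw [Finset.prod_congr rfl fun j _ => hb j]
  by_cases hst : s = t
  · subst hst
    simp [Finset.prod_const, div_self h2.ne']
  · have : ∃ j, s j ≠ t j := by
      by_contra hc
      push_neg at hc
      exact hst (funext hc)
    obtain ⟨j, hj⟩ := this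
    rw [Finset.prod_eq_zero (Finset.mem_univ j) (show (if s j = t j then (2:ℝ) else 0) = 0 from if_neg hj)]
    simp [hst]

end Aux

lemma dotc_comm (s x : Cube k) : dotc s x = dotc x s := by
  unfold dotc
  congr 1
  ext j
  simp [and_comm]

lemma walsh_comm (s x : Cube k) : walsh s x = walsh x s := by
  unfold walsh; rw [dotc_comm]

lemma walsh_ortho' (x y : Cube k) :
    ∑ s : Cube k, walsh s x * walsh s y = if x = y then (1:ℝ) else 0 := by
  have := walsh_ortho x y
  simpa [walsh_comm] using this

lemma walsh_sq (s x : Cube k) : (walsh s x) ^ 2 = 1 / 2 ^ k := by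
  have h2 : (0:ℝ) ≤ 2 ^ k := by positivity
  rw [walsh, div_pow, ← pow_mul, mul_comm (dotc s x) 2, pow_mul, Real.sq_sqrt h2]
  norm_num

lemma abs_walsh (s x : Cube k) : |walsh s x| = 1 / Real.sqrt (2 ^ k) := by
  rw [walsh, abs_div, abs_pow, abs_neg, abs_one, one_pow,
    abs_of_nonneg (Real.sqrt_nonneg _)]

lemma walsh_zero (x : Cube k) : walsh (fun _ => false) x = 1 / Real.sqrt (2 ^ k) := by
  unfold walsh dotc
  simp

lemma sum_walsh_zero : ∑ x : Cube k, walsh (fun _ => false) x = Real.sqrt (2 ^ k) := by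
  have h2 : (0:ℝ) < 2 ^ k := by positivity
  have hs : Real.sqrt (2 ^ k) ≠ 0 := by positivity
  simp only [walsh_zero, Finset.sum_const, Finset.card_univ]
  have hcard : Fintype.card (Cube k) = 2 ^ k := by simp
  rw [hcard, nsmul_eq_mul]
  push_cast
  field_simp
  rw [Real.sq_sqrt h2.le]

lemma sum_walsh (s : Cube k) (hs : s ≠ fun _ => false) : ∑ x : Cube k, walsh s x = 0 := by
  have h := walsh_ortho s (fun _ => false)
  rw [if_neg hs] at h
  have hs0 : Real.sqrt (2 ^ k) ≠ 0 := by positivity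
  calc ∑ x : Cube k, walsh s x
      = Real.sqrt (2 ^ k) * ∑ x : Cube k, walsh s x * walsh (fun _ => false) x := by
        rw [Finset.mul_sum]
        refine Finset.sum_congr rfl fun x _ => ?_
        rw [walsh_zero]
        field_simp
    _ = 0 := by rw [h, mul_zero]

lemma theta_lin (c : Cube k → ℝ) (s : Cube k) :
    theta (fun x => ∑ t, c t * walsh t x) s = c s := by
  unfold theta ip
  simp only [Finset.sum_mul]
  rw [Finset.sum_comm]
  have : ∀ t : Cube k, ∑ x : Cube k, c t * walsh t x * walsh s x
      = c t * ∑ x : Cube k, walsh t x * walsh s x := by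
    intro t; rw [Finset.mul_sum]; exact Finset.sum_congr rfl fun x _ => by ring
  simp only [this, walsh_ortho]
  simp

lemma theta_sub (f g : Cube k → ℝ) (s : Cube k) :
    theta (fun x => f x - g x) s = theta f s - theta g s := by
  unfold theta ip
  rw [← Finset.sum_sub_distrib]
  exact Finset.sum_congr rfl fun x _ => by ring

lemma parseval (g : Cube k → ℝ) :
    ∑ s : Cube k, (theta g s) ^ 2 = ∑ x : Cube k, (g x) ^ 2 := by
  have h : ∀ s : Cube k, (theta g s) ^ 2
      = ∑ x : Cube k, ∑ y : Cube k, g x * g y * (walsh s x * walsh s y) := by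
    intro s
    rw [theta, ip, sq, Finset.sum_mul_sum]
    exact Finset.sum_congr rfl fun x _ => Finset.sum_congr rfl fun y _ => by ring
  simp only [h]
  rw [Finset.sum_comm]
  refine Finset.sum_congr rfl fun x _ => ?_
  rw [Finset.sum_comm]
  have : ∀ y : Cube k, ∑ s : Cube k, g x * g y * (walsh s x * walsh s y)
      = g x * g y * (if x = y then (1:ℝ) else 0) := by
    intro y
    rw [← walsh_ortho' x y, Finset.mul_sum]
  simp only [this, mul_ite, mul_zero, mul_one]
  simp [sq]

lemma sqrt_prod {ι : Type*} (s : Finset ι) (f : ι → ℝ) (h : ∀ i, 0 ≤ f i) :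
    Real.sqrt (∏ i ∈ s, f i) = ∏ i ∈ s, Real.sqrt (f i) := by
  classical
  induction s using Finset.cons_induction with
  | empty => simp
  | cons a s ha ih =>
    rw [Finset.prod_cons, Finset.prod_cons, Real.sqrt_mul (h a), ih]

lemma sum_prod_apply {α : Type*} [Fintype α] {n : ℕ} (g : α → ℝ) :
    ∑ xs : Fin n → α, ∏ i, g (xs i) = (∑ x, g x) ^ n := by
  classical
  rw [← Fintype.prod_sum (κ := fun _ : Fin n => α) (fun _ x => g x)]
  simp [Finset.prod_const]

lemma sqrt_le_of_sq_le {u b : ℝ} (hb : 0 ≤ b) (h : u ≤ b ^ 2) : Real.sqrt u ≤ b := by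
  rw [← Real.sqrt_sq hb]
  exact Real.sqrt_le_sqrt h

lemma le_sqrt_aux {g h : ℝ} (hg : 0 < g) (hhg : h ^ 2 ≤ g ^ 2) :
    g - h ^ 2 / g ≤ Real.sqrt (g ^ 2 - h ^ 2) := by
  have h0 : 0 ≤ g - h ^ 2 / g := by
    rw [sub_nonneg, div_le_iff₀ hg]
    nlinarith
  rw [← Real.sqrt_sq h0]
  apply Real.sqrt_le_sqrt
  have hne : g ≠ 0 := hg.ne'
  field_simp
  nlinarith [sq_nonneg h, sq_nonneg (h^2), mul_nonneg (sub_nonneg.mpr hhg) (sq_nonneg h)]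

lemma le_of_sq_le_sq' {x y : ℝ} (hx : 0 ≤ x) (hy : 0 ≤ y) (h : x ^ 2 ≤ y ^ 2) : x ≤ y := by
  nlinarith

/-- sign of τ at s -/
def epsA {d : ℕ} (τ : Cube d → Bool) (s : Cube d) : ℝ := if τ s then 1 else -1

noncomputable def thA {d : ℕ} (a : ℝ) (τ : Cube d → Bool) (s : Cube d) : ℝ :=
  if s = (fun _ => false) then 1 / Real.sqrt (2 ^ d) else a * epsA τ s

noncomputable def FA {d : ℕ} (a : ℝ) (τ : Cube d → Bool) : Cube d → ℝ :=
  fun x => ∑ t, thA a τ t * walsh t x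

variable {d : ℕ} {a : ℝ}

lemma abs_epsA (τ : Cube d → Bool) (s : Cube d) : |epsA τ s| = 1 := by
  unfold epsA; split <;> simp

lemma epsA_sq (τ : Cube d → Bool) (s : Cube d) : (epsA τ s) ^ 2 = 1 := by
  unfold epsA; split <;> norm_num

lemma theta_FA (τ : Cube d → Bool) (s : Cube d) : theta (FA a τ) s = thA a τ s :=
  theta_lin _ _

lemma abs_thA (ha : 0 ≤ a) (τ : Cube d → Bool) {s : Cube d} (hs : s ≠ fun _ => false) :
    |thA a τ s| = a := by
  rw [thA, if_neg hs, abs_mul, abs_epsA, abs_of_nonneg ha, mul_one]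

lemma FA_dev (ha : 0 ≤ a) (τ : Cube d → Bool) (x : Cube d) :
    |FA a τ x - 1 / 2 ^ d| ≤ a * Real.sqrt (2 ^ d) := by
  have hpos : (0:ℝ) < 2 ^ d := by positivity
  have hzterm : thA a τ (fun _ => false) * walsh (fun _ => false) x = 1 / 2 ^ d := by
    rw [thA, if_pos rfl, walsh_zero, div_mul_div_comm, one_mul,
      Real.mul_self_sqrt hpos.le]
  have hsplit : FA a τ x = 1 / 2 ^ d +
      ∑ t ∈ Finset.univ.erase (fun _ => false), thA a τ t * walsh t x := by
    rw [FA, ← Finset.add_sum_erase _ _ (Finset.mem_univ (fun _ => false)), hzterm]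
  rw [hsplit, add_sub_cancel_left]
  calc |∑ t ∈ Finset.univ.erase (fun _ => false), thA a τ t * walsh t x|
      ≤ ∑ t ∈ Finset.univ.erase (fun _ => false), |thA a τ t * walsh t x| :=
        Finset.abs_sum_le_sum_abs _ _
    _ ≤ ∑ t ∈ Finset.univ.erase (fun _ => false), a * (1 / Real.sqrt (2 ^ d)) := by
        refine Finset.sum_le_sum fun t ht => ?_
        rw [abs_mul, abs_thA ha τ (Finset.ne_of_mem_erase ht), abs_walsh]
    _ ≤ ∑ _t : Cube d, a * (1 / Real.sqrt (2 ^ d)) := by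
        refine Finset.sum_le_sum_of_subset_of_nonneg (Finset.erase_subset _ _)
          fun t _ _ => by positivity
    _ = a * Real.sqrt (2 ^ d) := by
        rw [Finset.sum_const, Finset.card_univ, nsmul_eq_mul]
        have hcard : ((Fintype.card (Cube d) : ℕ) : ℝ) = 2 ^ d := by push_cast [Fintype.card_fun]; norm_num
        have hss : Real.sqrt ((2:ℝ)^d) * Real.sqrt ((2:ℝ)^d) = 2^d := Real.mul_self_sqrt hpos.le
        have hsne : Real.sqrt ((2:ℝ)^d) ≠ 0 := by positivity
        rw [hcard]
        field_simp
        nlinarith [hss]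

lemma FA_sum (τ : Cube d → Bool) : ∑ x, FA a τ x = 1 := by
  have hpos : (0:ℝ) < 2 ^ d := by positivity
  unfold FA
  rw [Finset.sum_comm]
  have h : ∀ t : Cube d, ∑ x : Cube d, thA a τ t * walsh t x
      = thA a τ t * ∑ x : Cube d, walsh t x := fun t => (Finset.mul_sum _ _ _).symm
  simp only [h]
  rw [Finset.sum_eq_single (fun _ => false)]
  · rw [thA, if_pos rfl, sum_walsh_zero, one_div, inv_mul_cancel₀ (by positivity)]
  · intro t _ ht
    rw [sum_walsh t ht, mul_zero]
  · intro h'; exact absurd (Finset.mem_univ _) h'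

lemma FA_flip (τ : Cube d → Bool) {s : Cube d} (hs : s ≠ fun _ => false) (x : Cube d) :
    FA a (Function.update τ s (!τ s)) x = FA a τ x - 2 * a * epsA τ s * walsh s x := by
  unfold FA
  rw [← Finset.add_sum_erase _ _ (Finset.mem_univ s),
      ← Finset.add_sum_erase _ (fun t => thA a τ t * walsh t x) (Finset.mem_univ s)]
  have herase : ∑ t ∈ Finset.univ.erase s, thA a (Function.update τ s (!τ s)) t * walsh t x
      = ∑ t ∈ Finset.univ.erase s, thA a τ t * walsh t x := by
    refine Finset.sum_congr rfl fun t ht => ?_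
    have hts : t ≠ s := Finset.ne_of_mem_erase ht
    rw [thA, thA, epsA, epsA, Function.update_of_ne hts]
  rw [herase]
  have hflip : thA a (Function.update τ s (!τ s)) s = - (a * epsA τ s) := by
    rw [thA, if_neg hs, epsA, Function.update_self]
    cases hτ : τ s <;> simp [epsA, hτ]
  rw [hflip, thA, if_neg hs]
  ring

lemma FA_pos (ha : 0 ≤ a) (hdev : a * Real.sqrt (2 ^ d) ≤ 1 / (4 * 2 ^ d))
    (τ : Cube d → Bool) (x : Cube d) : 3 / (4 * 2 ^ d) ≤ FA a τ x := by
  have hpos : (0:ℝ) < 2 ^ d := by positivity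
  have := abs_le.mp (FA_dev ha τ x)
  have h1 : 1 / (2:ℝ) ^ d - 1 / (4 * 2 ^ d) ≤ FA a τ x := by linarith [this.1]
  calc (3:ℝ) / (4 * 2 ^ d) = 1 / 2 ^ d - 1 / (4 * 2 ^ d) := by field_simp; ring
    _ ≤ FA a τ x := h1

lemma FA_mem_Fclass (p : ℝ) (ha : 0 ≤ a) (hasmall : a ≤ 1 / Real.sqrt (2 ^ d))
    (hbnd : ∀ m : ℕ, m < 2 ^ d → 1 ≤ m →
      a ≤ 1 / Real.sqrt (2 ^ d) * ((m : ℝ) + 1) ^ (-(1 / p)))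
    (τ : Cube d → Bool) : FA a τ ∈ Fclass d p := by
  classical
  haveI : NeZero (2 ^ d) := ⟨by positivity⟩
  have hcard : Fintype.card (Cube d) = 2 ^ d := by simp
  let e0 : Fin (2 ^ d) ≃ Cube d := (Fintype.equivFinOfCardEq hcard).symm
  set z : Cube d := fun _ => false with hz
  let e : Fin (2 ^ d) ≃ Cube d := (Equiv.swap (0 : Fin (2 ^ d)) (e0.symm z)).trans e0
  have he0 : e 0 = z := by simp [e, Equiv.swap_apply_left]
  have hez : ∀ i, e i = z ↔ i = 0 := by
    intro i
    constructor
    · intro h; exact e.injective (h.trans he0.symm)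
    · rintro rfl; exact he0
  have habs : ∀ i : Fin (2 ^ d),
      |theta (FA a τ) (e i)| = if i = 0 then 1 / Real.sqrt (2 ^ d) else a := by
    intro i
    by_cases hi : i = 0
    · rw [if_pos hi, theta_FA, thA, if_pos (by rw [← hz]; exact (hez i).mpr hi),
        abs_of_nonneg (by positivity)]
    · rw [if_neg hi, theta_FA, abs_thA ha]
      rw [← hz]
      exact fun hc => hi ((hez i).mp hc)
  refine ⟨e, ?_, ?_⟩
  · intro i j hij
    rw [habs, habs]
    by_cases hi : i = 0
    · rw [if_pos hi]
      by_cases hj : j = 0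
      · rw [if_pos hj]
      · rw [if_neg hj]; exact hasmall
    · have hj : j ≠ 0 := by
        intro hj0
        apply hi
        subst hj0
        have h1 : i.val ≤ (0 : Fin (2 ^ d)).val := hij
        exact Fin.ext (by simpa using h1)
      rw [if_neg hi, if_neg hj]
  · intro m
    rw [habs]
    by_cases hm : m = 0
    · rw [if_pos hm, hm]
      simp [Real.one_rpow]
    · rw [if_neg hm]
      exact hbnd m.val m.isLt (Nat.one_le_iff_ne_zero.mpr
        (fun hc => hm (Fin.ext hc)))

set_option maxHeartbeats 2000000 in
/-- **Theorem 2, part 2.** There exists an absolute constant `C > 0` such that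
for every `0 < p ≤ 1`, every `d` with `M = 2^d ≥ 4`, and every sample size `n ≥ M^{2/p}`,
every estimator `f̂_n` (a map from samples to functions) has risk at least `C/n` for some
`f ∈ F^{+,1}_d(p)`; in particular the minimax risk is bounded below by `C/n`. -/
theorem minimax_lower_large :
    ∃ C : ℝ, 0 < C ∧
      ∀ p : ℝ, 0 < p → p ≤ 1 →
      ∀ d : ℕ, 4 ≤ 2 ^ d →
      ∀ n : ℕ, ((2 : ℝ) ^ d) ^ (2 / p) ≤ (n : ℝ) →
      ∀ est : (Fin n → Cube d) → (Cube d → ℝ),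
        ∃ f ∈ FclassDens d p,
          C / (n : ℝ) ≤ expSample f (fun xs => ∑ x : Cube d, (est xs x - f x) ^ 2) := by
  classical
  refine ⟨1/128, by norm_num, ?_⟩
  intro p hp hp1 d hM4 n hn est
  set Mr : ℝ := 2 ^ d with hMrdef
  have hMrpos : (0:ℝ) < Mr := by positivity
  have hMr4 : (4:ℝ) ≤ Mr := by
    have : ((4:ℕ):ℝ) ≤ ((2^d:ℕ):ℝ) := Nat.cast_le.mpr hM4
    push_cast at this
    exact this
  have hMr1 : (1:ℝ) ≤ Mr := by linarith
  have hMsq : Mr ^ 2 ≤ n := by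
    have h2p : (2:ℝ) ≤ 2/p := by
      rw [le_div_iff₀ hp]; nlinarith
    have h1 : Mr ^ ((2:ℕ):ℝ) ≤ Mr ^ (2/p) :=
      Real.rpow_le_rpow_of_exponent_le hMr1 (by push_cast; exact h2p)
    rw [Real.rpow_natCast] at h1
    exact h1.trans hn
  have hn16 : (16:ℝ) ≤ n := by nlinarith
  have hnpos : (0:ℝ) < n := by linarith
  have hnne : (n:ℝ) ≠ 0 := hnpos.ne'
  set a : ℝ := Real.sqrt (1 / (16 * n * Mr)) with haDef
  have ha0 : 0 ≤ a := Real.sqrt_nonneg _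
  have ha2 : a ^ 2 = 1 / (16 * n * Mr) := Real.sq_sqrt (by positivity)
  have hsqrtpos : 0 < Real.sqrt Mr := Real.sqrt_pos.mpr hMrpos
  have hss : Real.sqrt Mr * Real.sqrt Mr = Mr := Real.mul_self_sqrt hMrpos.le
  have hsqrt1 : 1 ≤ Real.sqrt Mr := by nlinarith
  have hB : a * Real.sqrt Mr ≤ 1 / (4 * Mr) := by
    refine le_of_sq_le_sq' (by positivity) (by positivity) ?_
    have h1 : (a * Real.sqrt Mr)^2 = 1/(16*n) := by
      rw [mul_pow, ha2, Real.sq_sqrt hMrpos.le]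
      field_simp
    rw [h1, div_pow, one_pow]
    rw [div_le_div_iff₀ (by positivity) (by positivity)]
    nlinarith
  have hasmall : a ≤ 1 / Real.sqrt Mr := by
    have h1 : a ≤ a * Real.sqrt Mr := by nlinarith
    have h2 : 1 / (4 * Mr) ≤ 1 / Real.sqrt Mr := by
      rw [div_le_div_iff₀ (by positivity) (by positivity)]
      nlinarith
    linarith
  -- membership in the class
  have hmem : ∀ τ : Cube d → Bool, FA a τ ∈ FclassDens d p := by
    intro τ
    constructor
    · refine FA_mem_Fclass p ha0 hasmall ?_ τ
      intro m hm hm1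
      have hm1R : (1:ℝ) ≤ (m:ℝ) + 1 := by
        have : (0:ℝ) ≤ (m:ℝ) := Nat.cast_nonneg m
        linarith
      have hmM : (m:ℝ) + 1 ≤ Mr := by
        have : ((m+1:ℕ):ℝ) ≤ ((2^d:ℕ):ℝ) := Nat.cast_le.mpr hm
        push_cast at this
        linarith
      set t : ℝ := ((m:ℝ) + 1) ^ (-(1/p)) with htdef
      have htpos : 0 < t := Real.rpow_pos_of_pos (by linarith) _
      have ht2 : t * t = (((m:ℝ)+1) ^ (2/p))⁻¹ := by
        rw [htdef, ← Real.rpow_add (by linarith : (0:ℝ) < (m:ℝ)+1)]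
        rw [← Real.rpow_neg (by linarith : (0:ℝ) ≤ (m:ℝ)+1)]
        congr 1
        ring
      have hup : ((m:ℝ)+1) ^ (2/p) ≤ n :=
        le_trans (Real.rpow_le_rpow (by linarith) hmM (by positivity)) hn
      have hup0 : 0 < ((m:ℝ)+1) ^ (2/p) := Real.rpow_pos_of_pos (by linarith) _
      refine le_of_sq_le_sq' ha0 (by positivity) ?_
      have hT2 : (1 / Real.sqrt Mr * t)^2 = (1/Mr) * (((m:ℝ)+1) ^ (2/p))⁻¹ := by
        rw [mul_pow, div_pow, one_pow, Real.sq_sqrt hMrpos.le, sq, ht2]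
      rw [hT2, ha2]
      have hinv : (1:ℝ)/n ≤ (((m:ℝ)+1) ^ (2/p))⁻¹ := by
        rw [← one_div]
        exact one_div_le_one_div_of_le hup0 hup
      have : (1:ℝ)/(16*n*Mr) ≤ (1/Mr) * (1/n) := by
        rw [one_div_mul_one_div]
        refine one_div_le_one_div_of_le (by positivity) ?_
        nlinarith
      calc (1:ℝ)/(16*n*Mr) ≤ (1/Mr) * (1/n) := this
        _ ≤ (1/Mr) * (((m:ℝ)+1) ^ (2/p))⁻¹ := by
            refine mul_le_mul_of_nonneg_left hinv (by positivity)
    · constructor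
      · intro x
        have := FA_pos ha0 hB τ x
        have h34 : (0:ℝ) ≤ 3/(4*Mr) := by positivity
        linarith
      · exact FA_sum τ
  -- statistical lower bound
  set z : Cube d := (fun _ => false) with hzdef
  set S : Finset (Cube d) := Finset.univ.erase z with hSdef
  set P : (Cube d → Bool) → (Fin n → Cube d) → ℝ :=
    fun τ xs => ∏ i, FA a τ (xs i) with hPdef
  set D : (Cube d → Bool) → Cube d → ℝ := fun τ s =>
    ∑ xs : Fin n → Cube d, P τ xs * (theta (est xs) s - a * epsA τ s) ^ 2 with hDdef
  set Risk : (Cube d → Bool) → ℝ := fun τ =>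
    ∑ xs : Fin n → Cube d, P τ xs * (∑ x, (est xs x - FA a τ x) ^ 2) with hRdef
  have hFpos : ∀ τ x, 0 < FA a τ x := fun τ x =>
    lt_of_lt_of_le (by positivity) (FA_pos ha0 hB τ x)
  have hPnn : ∀ τ xs, 0 ≤ P τ xs := fun τ xs =>
    Finset.prod_nonneg fun i _ => (hFpos τ (xs i)).le
  have hPsum : ∀ τ, ∑ xs : Fin n → Cube d, P τ xs = 1 := by
    intro τ
    rw [hPdef]
    rw [sum_prod_apply (fun x => FA a τ x), FA_sum τ, one_pow]
  have hMcard : ((Fintype.card (Cube d) : ℕ) : ℝ) = Mr := by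
    rw [hMrdef]; push_cast [Fintype.card_fun]; norm_num
  -- step 1 : Risk dominates the sum of coordinate risks
  have h1 : ∀ τ, ∑ s ∈ S, D τ s ≤ Risk τ := by
    intro τ
    have hloss : ∀ xs, ∑ s ∈ S, (theta (est xs) s - a * epsA τ s) ^ 2
        ≤ ∑ x, (est xs x - FA a τ x) ^ 2 := by
      intro xs
      rw [← parseval (fun x => est xs x - FA a τ x)]
      calc ∑ s ∈ S, (theta (est xs) s - a * epsA τ s) ^ 2
          = ∑ s ∈ S, (theta (fun x => est xs x - FA a τ x) s) ^ 2 := by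
            refine Finset.sum_congr rfl fun s hs => ?_
            rw [theta_sub, theta_FA, thA, if_neg (Finset.ne_of_mem_erase hs)]
        _ ≤ ∑ s : Cube d, (theta (fun x => est xs x - FA a τ x) s) ^ 2 :=
            Finset.sum_le_sum_of_subset_of_nonneg (Finset.subset_univ S)
              fun s _ _ => sq_nonneg _
    calc ∑ s ∈ S, D τ s
        = ∑ xs : Fin n → Cube d, P τ xs *
            (∑ s ∈ S, (theta (est xs) s - a * epsA τ s) ^ 2) := by
          rw [hDdef, Finset.sum_comm]
          exact Finset.sum_congr rfl fun xs _ => (Finset.mul_sum _ _ _).symm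
      _ ≤ Risk τ := by
          refine Finset.sum_le_sum fun xs _ => ?_
          exact mul_le_mul_of_nonneg_left (hloss xs) (hPnn τ xs)
  -- step 2 : pair lower bound
  have h2 : ∀ s ∈ S, ∀ τ : Cube d → Bool,
      a ^ 2 / 2 ≤ D τ s + D (Function.update τ s (!τ s)) s := by
    intro s hsS τ
    have hs : s ≠ z := Finset.ne_of_mem_erase hsS
    set τ' : Cube d → Bool := Function.update τ s (!τ s) with hτ'
    have hε' : epsA τ' s = -epsA τ s := by
      rw [hτ', epsA, epsA, Function.update_self]
      cases hb : τ s <;> simp [hb]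
    have hF' : ∀ x, FA a τ' x = FA a τ x - 2 * a * epsA τ s * walsh s x :=
      fun x => FA_flip τ hs x
    set g : Cube d → ℝ := fun x => FA a τ x - a * epsA τ s * walsh s x with hgdef
    set hh : Cube d → ℝ := fun x => a * epsA τ s * walsh s x with hhdef
    have hgp : ∀ x, FA a τ x = g x + hh x := fun x => by rw [hgdef, hhdef]; ring
    have hgm : ∀ x, FA a τ' x = g x - hh x := fun x => by
      rw [hF' x, hgdef, hhdef]; ring
    have hh2 : ∀ x, (hh x) ^ 2 = a ^ 2 / Mr := by
      intro x
      rw [hhdef]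
      have : (a * epsA τ s * walsh s x)^2 = a^2 * (epsA τ s)^2 * (walsh s x)^2 := by ring
      rw [this, epsA_sq, walsh_sq, hMrdef]
      ring
    have hhabs : ∀ x, |hh x| ≤ a * Real.sqrt Mr := by
      intro x
      have h1 : |hh x| = a * 1 * (1 / Real.sqrt Mr) := by
        rw [hhdef, abs_mul, abs_mul, abs_epsA, abs_walsh, abs_of_nonneg ha0, ← hMrdef]
      rw [h1]
      have h2 : 1 / Real.sqrt Mr ≤ Real.sqrt Mr := by
        rw [div_le_iff₀ hsqrtpos]; nlinarith
      nlinarith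
    have hglb : ∀ x, 1 / (2 * Mr) ≤ g x := by
      intro x
      have hdev := (abs_le.mp (FA_dev ha0 τ x)).1
      rw [← hMrdef] at hdev
      have h2 := abs_le.mp (le_trans (hhabs x) hB)
      have h3 : g x = FA a τ x - hh x := rfl
      rw [h3]
      have hMr' : 1/Mr - 1/(4*Mr) - 1/(4*Mr) = 1/(2*Mr) := by field_simp; ring
      linarith
    have hgpos : ∀ x, 0 < g x := fun x => lt_of_lt_of_le (by positivity) (hglb x)
    have hh2g : ∀ x, (hh x)^2 ≤ (g x)^2 := by
      intro x
      have h1 : (hh x)^2 = a^2/Mr := hh2 x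
      have h2 : a^2/Mr ≤ 1/(4*Mr^2) := by
        rw [ha2, div_div]
        refine one_div_le_one_div_of_le (by positivity) ?_
        nlinarith [sq_nonneg Mr, mul_pos hMrpos hMrpos]
      have h3 : (1/(2*Mr))^2 ≤ (g x)^2 :=
        pow_le_pow_left₀ (by positivity) (hglb x) 2
      have h4 : (1:ℝ)/(4*Mr^2) = (1/(2*Mr))^2 := by field_simp; ring
      calc (hh x)^2 = a^2/Mr := h1
        _ ≤ 1/(4*Mr^2) := h2
        _ = (1/(2*Mr))^2 := h4
        _ ≤ (g x)^2 := h3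
    -- Hellinger affinity lower bound
    have hρ1 : 1 - 1/(8*n) ≤ ∑ x, Real.sqrt (FA a τ x * FA a τ' x) := by
      have hpt : ∀ x, g x - (hh x)^2 / g x ≤ Real.sqrt (FA a τ x * FA a τ' x) := by
        intro x
        have heq : FA a τ x * FA a τ' x = (g x)^2 - (hh x)^2 := by
          rw [hgp x, hgm x]; ring
        rw [heq]
        exact le_sqrt_aux (hgpos x) (hh2g x)
      have hsum1 : ∑ x, g x = 1 := by
        have : ∑ x, g x = ∑ x, FA a τ x - a * epsA τ s * ∑ x, walsh s x := by
          rw [Finset.mul_sum, ← Finset.sum_sub_distrib]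
        rw [this, FA_sum τ, sum_walsh s hs, mul_zero, sub_zero]
      have hsum2 : ∑ x, (hh x)^2 / g x ≤ 1/(8*n) := by
        have hpt2 : ∀ x, (hh x)^2 / g x ≤ 2 * a^2 := by
          intro x
          rw [div_le_iff₀ (hgpos x), hh2 x]
          calc a^2/Mr = (2*a^2) * (1/(2*Mr)) := by field_simp
            _ ≤ (2*a^2) * g x := by
                refine mul_le_mul_of_nonneg_left (hglb x) (by positivity)
        calc ∑ x, (hh x)^2 / g x ≤ ∑ _x : Cube d, 2*a^2 :=
              Finset.sum_le_sum fun x _ => hpt2 x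
          _ = 1/(8*n) := by
              rw [Finset.sum_const, Finset.card_univ, nsmul_eq_mul, hMcard, ha2]
              field_simp
              ring
      calc (1:ℝ) - 1/(8*n)
          ≤ ∑ x, g x - ∑ x, (hh x)^2 / g x := by rw [hsum1]; linarith
        _ = ∑ x, (g x - (hh x)^2 / g x) := (Finset.sum_sub_distrib _ _).symm
        _ ≤ ∑ x, Real.sqrt (FA a τ x * FA a τ' x) :=
            Finset.sum_le_sum fun x _ => hpt x
    -- product affinity
    have hPP : ∀ xs : Fin n → Cube d,
        P τ xs * P τ' xs = ∏ i, (FA a τ (xs i) * FA a τ' (xs i)) := by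
      intro xs
      rw [hPdef]
      exact (Finset.prod_mul_distrib).symm
    set ρ1 : ℝ := ∑ x, Real.sqrt (FA a τ x * FA a τ' x) with hρ1def
    have hρprod : ∑ xs : Fin n → Cube d, Real.sqrt (P τ xs * P τ' xs) = ρ1 ^ n := by
      rw [hρ1def, ← sum_prod_apply (fun x => Real.sqrt (FA a τ x * FA a τ' x))]
      refine Finset.sum_congr rfl fun xs _ => ?_
      rw [hPP xs, sqrt_prod _ _ (fun i => mul_nonneg (hFpos τ _).le (hFpos τ' _).le)]
    have h8npos : (0:ℝ) < 8*n := by positivity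
    have h18n : (0:ℝ) ≤ 1 - 1/(8*n) := by
      have : 1/(8*(n:ℝ)) ≤ 1 := by rw [div_le_one h8npos]; linarith
      linarith
    have hbern : (7:ℝ)/8 ≤ (1 - 1/(8*n))^n := by
      have hx : (-2:ℝ) ≤ -(1/(8*n)) := by
        have : 1/(8*(n:ℝ)) ≤ 2 := by rw [div_le_iff₀ h8npos]; nlinarith
        linarith
      have hbp := one_add_mul_le_pow hx n
      have hcalc : 1 + (n:ℝ) * (-(1/(8*n))) = 7/8 := by field_simp; ring
      calc (7:ℝ)/8 = 1 + (n:ℝ) * (-(1/(8*n))) := hcalc.symm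
        _ ≤ (1 + -(1/(8*n)))^n := hbp
        _ = (1 - 1/(8*n))^n := by ring_nf
    have hρn : (7:ℝ)/8 ≤ ρ1 ^ n := le_trans hbern (pow_le_pow_left₀ h18n hρ1 n)
    -- total-variation overlap via Cauchy–Schwarz
    set mm : ℝ := ∑ xs : Fin n → Cube d, min (P τ xs) (P τ' xs) with hmmdef
    have hmmnn : 0 ≤ mm :=
      Finset.sum_nonneg fun xs _ => le_min (hPnn τ xs) (hPnn τ' xs)
    have hCS : (ρ1^n)^2 ≤ mm * (2 - mm) := by
      have hmax : ∑ xs : Fin n → Cube d, max (P τ xs) (P τ' xs) = 2 - mm := by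
        have hpt : ∀ xs : Fin n → Cube d, max (P τ xs) (P τ' xs)
            = P τ xs + P τ' xs - min (P τ xs) (P τ' xs) := by
          intro xs
          have := min_add_max (P τ xs) (P τ' xs)
          linarith
        rw [Finset.sum_congr rfl fun xs _ => hpt xs, Finset.sum_sub_distrib,
          Finset.sum_add_distrib, hPsum τ, hPsum τ', ← hmmdef]
        norm_num
      have hcs := Finset.sum_mul_sq_le_sq_mul_sq Finset.univ
        (fun xs : Fin n → Cube d => Real.sqrt (min (P τ xs) (P τ' xs)))
        (fun xs : Fin n → Cube d => Real.sqrt (max (P τ xs) (P τ' xs)))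
      have h1 : ∀ xs : Fin n → Cube d,
          Real.sqrt (min (P τ xs) (P τ' xs)) * Real.sqrt (max (P τ xs) (P τ' xs))
            = Real.sqrt (P τ xs * P τ' xs) := by
        intro xs
        rw [← Real.sqrt_mul (le_min (hPnn τ xs) (hPnn τ' xs)), min_mul_max]
      have h2 : ∀ xs : Fin n → Cube d,
          (Real.sqrt (min (P τ xs) (P τ' xs)))^2 = min (P τ xs) (P τ' xs) :=
        fun xs => Real.sq_sqrt (le_min (hPnn τ xs) (hPnn τ' xs))
      have h3 : ∀ xs : Fin n → Cube d,
          (Real.sqrt (max (P τ xs) (P τ' xs)))^2 = max (P τ xs) (P τ' xs) :=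
        fun xs => Real.sq_sqrt ((hPnn τ xs).trans (le_max_left _ _))
      calc (ρ1^n)^2 = (∑ xs : Fin n → Cube d, Real.sqrt (P τ xs * P τ' xs))^2 := by
            rw [hρprod]
        _ = (∑ xs : Fin n → Cube d, Real.sqrt (min (P τ xs) (P τ' xs)) *
              Real.sqrt (max (P τ xs) (P τ' xs)))^2 := by
            rw [Finset.sum_congr rfl fun xs _ => (h1 xs).symm]
        _ ≤ (∑ xs : Fin n → Cube d, (Real.sqrt (min (P τ xs) (P τ' xs)))^2) *
            (∑ xs : Fin n → Cube d, (Real.sqrt (max (P τ xs) (P τ' xs)))^2) := hcs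
        _ = mm * (2 - mm) := by
            rw [Finset.sum_congr rfl fun xs _ => h2 xs,
              Finset.sum_congr rfl fun xs _ => h3 xs, hmax, ← hmmdef]
    have hmm14 : 1/4 ≤ mm := by
      have h49 : (49:ℝ)/64 ≤ (ρ1^n)^2 := by nlinarith [hρn]
      nlinarith [hmmnn, hCS, h49]
    -- pointwise pair bound and summation
    have hpair : ∀ xs : Fin n → Cube d, min (P τ xs) (P τ' xs) * (2*a^2) ≤
        P τ xs * (theta (est xs) s - a * epsA τ s)^2 +
        P τ' xs * (theta (est xs) s - a * epsA τ' s)^2 := by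
      intro xs
      have hq : 2*a^2 ≤ (theta (est xs) s - a*epsA τ s)^2 +
          (theta (est xs) s - a*epsA τ' s)^2 := by
        rw [hε']
        nlinarith [sq_nonneg (theta (est xs) s), epsA_sq τ s, sq_nonneg a]
      calc min (P τ xs) (P τ' xs) * (2*a^2)
          ≤ min (P τ xs) (P τ' xs) * ((theta (est xs) s - a*epsA τ s)^2 +
              (theta (est xs) s - a*epsA τ' s)^2) :=
            mul_le_mul_of_nonneg_left hq (le_min (hPnn τ xs) (hPnn τ' xs))
        _ = min (P τ xs) (P τ' xs) * (theta (est xs) s - a*epsA τ s)^2 +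
            min (P τ xs) (P τ' xs) * (theta (est xs) s - a*epsA τ' s)^2 := by ring
        _ ≤ P τ xs * (theta (est xs) s - a*epsA τ s)^2 +
            P τ' xs * (theta (est xs) s - a*epsA τ' s)^2 :=
            add_le_add
              (mul_le_mul_of_nonneg_right (min_le_left _ _) (sq_nonneg _))
              (mul_le_mul_of_nonneg_right (min_le_right _ _) (sq_nonneg _))
    calc a^2/2 = (1/4) * (2*a^2) := by ring
      _ ≤ mm * (2*a^2) := mul_le_mul_of_nonneg_right hmm14 (by positivity)
      _ = ∑ xs : Fin n → Cube d, min (P τ xs) (P τ' xs) * (2*a^2) := by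
          rw [hmmdef, Finset.sum_mul]
      _ ≤ ∑ xs : Fin n → Cube d,
            (P τ xs * (theta (est xs) s - a*epsA τ s)^2 +
             P τ' xs * (theta (est xs) s - a*epsA τ' s)^2) :=
          Finset.sum_le_sum fun xs _ => hpair xs
      _ = D τ s + D τ' s := by
          rw [hDdef, Finset.sum_add_distrib]
  -- step 3 : average over sign vectors
  set NT : ℝ := ((Fintype.card (Cube d → Bool) : ℕ) : ℝ) with hNT
  have hNTpos : 0 < NT := by
    rw [hNT]
    exact_mod_cast Fintype.card_pos
  have h3 : ∀ s ∈ S, NT * (a^2/4) ≤ ∑ τ : Cube d → Bool, D τ s := by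
    intro s hsS
    have hinv : Function.Involutive (fun τ : Cube d → Bool =>
        Function.update τ s (!τ s)) := by
      intro τ
      funext t
      by_cases ht : t = s
      · subst ht; simp
      · simp [Function.update_of_ne ht]
    have hsumeq : ∑ τ : Cube d → Bool, D (Function.update τ s (!τ s)) s
        = ∑ τ : Cube d → Bool, D τ s :=
      Equiv.sum_comp hinv.toPerm (fun τ => D τ s)
    have h2' : NT * (a^2/2) ≤ ∑ τ : Cube d → Bool,
        (D τ s + D (Function.update τ s (!τ s)) s) := by
      calc NT * (a^2/2) = ∑ _τ : Cube d → Bool, a^2/2 := by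
            rw [Finset.sum_const, Finset.card_univ, nsmul_eq_mul, hNT]
        _ ≤ _ := Finset.sum_le_sum fun τ _ => h2 s hsS τ
    rw [Finset.sum_add_distrib, hsumeq] at h2'
    linarith
  -- step 4 : total risk bound
  have hScard : (S.card : ℝ) = Mr - 1 := by
    rw [hSdef, Finset.card_erase_of_mem (Finset.mem_univ z), Finset.card_univ]
    have hc : Fintype.card (Cube d) = 2^d := by simp
    rw [hc, Nat.cast_sub (Nat.one_le_two_pow), hMrdef]
    push_cast
    norm_num
  have h4 : NT * (1/(128*n)) ≤ ∑ τ : Cube d → Bool, Risk τ := by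
    have hA : ∑ τ : Cube d → Bool, ∑ s ∈ S, D τ s ≤ ∑ τ : Cube d → Bool, Risk τ :=
      Finset.sum_le_sum fun τ _ => h1 τ
    have hB2 : ∑ τ : Cube d → Bool, ∑ s ∈ S, D τ s
        = ∑ s ∈ S, ∑ τ : Cube d → Bool, D τ s := Finset.sum_comm
    have hC : ∑ _s ∈ S, NT * (a^2/4) ≤ ∑ s ∈ S, ∑ τ : Cube d → Bool, D τ s :=
      Finset.sum_le_sum h3
    rw [Finset.sum_const, nsmul_eq_mul, hScard] at hC
    have hr : (Mr - 1) * (NT * (a^2/4)) = NT * ((Mr-1) * (a^2/4)) := by ring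
    have hkey : 1/(128*n) ≤ (Mr-1) * (a^2/4) := by
      have hratio : (Mr - 1) * (a^2/4) = (Mr-1) / (64*n*Mr) := by
        rw [ha2, div_div, mul_one_div]
        have : 16 * (n:ℝ) * Mr * 4 = 64 * n * Mr := by ring
        rw [this]
      rw [hratio, div_le_div_iff₀ (by positivity) (by positivity)]
      nlinarith [mul_pos hnpos hMrpos, hnpos]
    calc NT * (1/(128*n)) ≤ NT * ((Mr-1) * (a^2/4)) :=
          mul_le_mul_of_nonneg_left hkey hNTpos.le
      _ = (Mr - 1) * (NT * (a^2/4)) := by ring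
      _ ≤ ∑ s ∈ S, ∑ τ : Cube d → Bool, D τ s := hC
      _ = ∑ τ : Cube d → Bool, ∑ s ∈ S, D τ s := hB2.symm
      _ ≤ ∑ τ : Cube d → Bool, Risk τ := hA
  -- step 5 : extract a good sign vector
  have h5 : ∃ τ : Cube d → Bool, 1/128/(n:ℝ) ≤ Risk τ := by
    by_contra hc
    push_neg at hc
    have hlt : ∑ τ : Cube d → Bool, Risk τ
        < ∑ _τ : Cube d → Bool, 1/128/(n:ℝ) :=
      Finset.sum_lt_sum_of_nonempty Finset.univ_nonempty fun τ _ => hc τ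
    rw [Finset.sum_const, Finset.card_univ, nsmul_eq_mul] at hlt
    have heq : ((Fintype.card (Cube d → Bool) : ℕ) : ℝ) * (1/128/(n:ℝ))
        = NT * (1/(128*n)) := by
      rw [hNT]
      ring
    rw [heq] at hlt
    linarith
  obtain ⟨τ, hτ⟩ := h5
  refine ⟨FA a τ, hmem τ, ?_⟩
  exact hτ


end RWT
end

section
/- Let 0 < p ≤ 1, M = 2^d, and let k ∈ {1,…,M−1} and a > 0 satisfy ka ≤ 1/(2√M) and a ≤ M^{−1/2}(k+1)^{−1/p}. Then every f ∈ F(k,a) satisfies 1/(2M) ≤ f(x) ≤ 3/(2M) for all x ∈ {0,1}^d, and F(k,a) ⊆ F^{+,1}_d(p). -/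
open scoped BigOperators

namespace RWT

section Aux
variable {d : ℕ}

lemma neg_one_pow_dotc (s z : Cube d) :
    ((-1:ℝ)) ^ dotc s z = ∏ j : Fin d, (if s j = true ∧ z j = true then (-1:ℝ) else 1) := by
  classical
  rw [Finset.prod_ite (fun _ => (-1:ℝ)) (fun _ => (1:ℝ)), Finset.prod_const,
    Finset.prod_const_one, mul_one, dotc]

lemma sum_walsh_mul (x y : Cube d) :
    ∑ s : Cube d, walsh s x * walsh s y = if x = y then 1 else 0 := by
  classical
  have hs : Real.sqrt ((2:ℝ)^d) * Real.sqrt ((2:ℝ)^d) = (2:ℝ)^d :=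
    Real.mul_self_sqrt (by positivity)
  have h2 : ((2:ℝ)^d) ≠ 0 := by positivity
  have key : ∑ s : Cube d, ((-1:ℝ)) ^ dotc s x * (-1) ^ dotc s y
      = if x = y then (2:ℝ)^d else 0 := by
    have step : ∀ s : Cube d, ((-1:ℝ)) ^ dotc s x * (-1) ^ dotc s y
        = ∏ j : Fin d, ((if s j = true ∧ x j = true then (-1:ℝ) else 1) *
            (if s j = true ∧ y j = true then (-1:ℝ) else 1)) := by
      intro s; rw [neg_one_pow_dotc, neg_one_pow_dotc, ← Finset.prod_mul_distrib]
    simp_rw [step]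
    rw [show (Finset.univ : Finset (Cube d)) = Fintype.piFinset (fun _ => (Finset.univ : Finset Bool)) from (Fintype.piFinset_univ).symm]
    rw [← Finset.prod_univ_sum (fun _ => (Finset.univ : Finset Bool))
        (fun j b => (if b = true ∧ x j = true then (-1:ℝ) else 1) *
          (if b = true ∧ y j = true then (-1:ℝ) else 1))]
    have fact : ∀ j : Fin d,
        (∑ b : Bool, ((if b = true ∧ x j = true then (-1:ℝ) else 1) *
          (if b = true ∧ y j = true then (-1:ℝ) else 1)))
        = if x j = y j then 2 else 0 := by
      intro j; cases hx : x j <;> cases hy : y j <;> simp [hx, hy] <;> norm_num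
    simp_rw [fact]
    by_cases hxy : x = y
    · subst hxy; simp
    · rw [if_neg hxy]
      obtain ⟨j, hj⟩ := Function.ne_iff.mp hxy
      exact Finset.prod_eq_zero (Finset.mem_univ j) (if_neg hj)
  calc ∑ s : Cube d, walsh s x * walsh s y
      = (∑ s : Cube d, (-1:ℝ)^dotc s x * (-1)^dotc s y) / (2:ℝ)^d := by
        rw [Finset.sum_div]
        refine Finset.sum_congr rfl fun s _ => ?_
        rw [walsh, walsh, div_mul_div_comm, hs]
    _ = if x = y then 1 else 0 := by rw [key]; split <;> field_simp <;> simp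

lemma f_eq_sum_theta (f : Cube d → ℝ) (x : Cube d) :
    f x = ∑ s : Cube d, theta f s * walsh s x := by
  classical
  have : ∑ s : Cube d, theta f s * walsh s x
      = ∑ y : Cube d, f y * (if y = x then (1:ℝ) else 0) := by
    simp_rw [theta, ip, Finset.sum_mul, mul_assoc]
    rw [Finset.sum_comm]
    refine Finset.sum_congr rfl fun y _ => ?_
    rw [← Finset.mul_sum, sum_walsh_mul]
  rw [this]
  simp

lemma walsh_zero_left (x : Cube d) :
    walsh (fun _ => false) x = 1 / Real.sqrt ((2:ℝ)^d) := by
  have h : dotc (fun _ => false : Cube d) x = 0 := by simp [dotc]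
  rw [walsh, h, pow_zero]

end Aux

/-- **Lemma 3, item 1.** Let `0 < p ≤ 1`, `M = 2^d`, `k ∈ {1,…,M-1}` and
`a > 0` satisfy `ka ≤ 1/(2√M)` and `a ≤ M^{-1/2}(k+1)^{-1/p}`. Then every `f ∈ F(k,a)`
satisfies `1/(2M) ≤ f(x) ≤ 3/(2M)` for all `x`, and `F(k,a) ⊆ F^{+,1}_d(p)`. -/
theorem Fka_subset_class (d : ℕ) (hd : 1 ≤ d) (p : ℝ) (hp0 : 0 < p) (hp1 : p ≤ 1)
    (k : ℕ) (hk1 : 1 ≤ k) (hkM : k ≤ 2 ^ d - 1) (a : ℝ) (ha : 0 < a)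
    (h1 : (k : ℝ) * a ≤ 1 / (2 * Real.sqrt (2 ^ d)))
    (h2 : a ≤ (1 / Real.sqrt (2 ^ d)) * ((k : ℝ) + 1) ^ (-(1 / p))) :
    ∀ f ∈ Fka d k a,
      (∀ x : Cube d, 1 / (2 * (2 : ℝ) ^ d) ≤ f x ∧ f x ≤ 3 / (2 * (2 : ℝ) ^ d)) ∧
      f ∈ FclassDens d p := by
  classical
  intro f hf
  obtain ⟨h0, hvals, hcard⟩ := hf
  set z : Cube d := (fun _ => false) with hz
  set sq : ℝ := Real.sqrt ((2:ℝ)^d) with hsqdef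
  have h2dpos : (0:ℝ) < (2:ℝ)^d := by positivity
  have hsqpos : 0 < sq := Real.sqrt_pos.mpr h2dpos
  have hsqsq : sq * sq = (2:ℝ)^d := Real.mul_self_sqrt h2dpos.le
  have hsq1 : 1 ≤ sq := by nlinarith [one_le_pow₀ (by norm_num : (1:ℝ) ≤ 2) (n := d)]
  set T : Finset (Cube d) := Finset.univ.filter (fun s => s ≠ z ∧ theta f s ≠ 0) with hTdef
  have hT : T.card = k := by
    rw [← hcard, Set.ncard_eq_toFinset_card']
    congr 1
    ext s
    simp [hTdef]
  have habs : ∀ s ∈ T, |theta f s| = a := by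
    intro s hs
    obtain ⟨-, hsz, hsn⟩ := Finset.mem_filter.mp hs |>.imp id id
    rcases hvals s hsz with h | h | h
    · exact absurd h hsn
    · rw [h, abs_of_pos ha]
    · rw [h, abs_neg, abs_of_pos ha]
  have hzero : ∀ s : Cube d, s ≠ z → s ∉ T → theta f s = 0 := by
    intro s hsz hsT
    by_contra hsn
    exact hsT (Finset.mem_filter.mpr ⟨Finset.mem_univ _, hsz, hsn⟩)
  have hwabs : ∀ s x : Cube d, |walsh s x| = 1 / sq := by
    intro s x
    rw [walsh, abs_div, abs_pow, abs_neg, abs_one, one_pow, abs_of_pos hsqpos]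
  -- pointwise bound
  have hbound : ∀ x : Cube d, |f x - 1/(2:ℝ)^d| ≤ 1/(2*(2:ℝ)^d) := by
    intro x
    have hsplit : theta f z * walsh z x + ∑ s ∈ Finset.univ.erase z, theta f s * walsh s x
        = ∑ s : Cube d, theta f s * walsh s x :=
      Finset.add_sum_erase Finset.univ (fun s => theta f s * walsh s x) (Finset.mem_univ z)
    have hfirst : theta f z * walsh z x = 1/(2:ℝ)^d := by
      rw [h0, walsh_zero_left]
      rw [← hsqdef, div_mul_div_comm, one_mul, hsqsq]
    have hmain : f x - 1/(2:ℝ)^d = ∑ s ∈ Finset.univ.erase z, theta f s * walsh s x := by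
      rw [f_eq_sum_theta f x, ← hsplit, hfirst]; ring
    rw [hmain]
    have hsub : T ⊆ Finset.univ.erase z := by
      intro s hs
      exact Finset.mem_erase.mpr ⟨(Finset.mem_filter.mp hs).2.1, Finset.mem_univ _⟩
    calc |∑ s ∈ Finset.univ.erase z, theta f s * walsh s x|
        ≤ ∑ s ∈ Finset.univ.erase z, |theta f s * walsh s x| :=
          Finset.abs_sum_le_sum_abs _ _
      _ = ∑ s ∈ Finset.univ.erase z, |theta f s| * (1/sq) := by
          refine Finset.sum_congr rfl fun s _ => ?_
          rw [abs_mul, hwabs]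
      _ = ∑ s ∈ T, |theta f s| * (1/sq) := by
          refine (Finset.sum_subset hsub fun s hs hsT => ?_).symm
          rw [hzero s (Finset.mem_erase.mp hs).1 hsT, abs_zero, zero_mul]
      _ = (k:ℝ) * a * (1/sq) := by
          rw [Finset.sum_congr rfl (fun s hs => by rw [habs s hs]),
            Finset.sum_const, hT, nsmul_eq_mul, ← mul_assoc]
      _ ≤ 1/(2*(2:ℝ)^d) := by
          rw [← hsqsq]
          have hstep : (k:ℝ) * a * (1/sq) ≤ (1/(2*sq)) * (1/sq) :=
            mul_le_mul_of_nonneg_right h1 (by positivity)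
          have heq : (1/(2*sq)) * (1/sq) = 1/(2*(sq*sq)) := by
            rw [div_mul_div_comm, one_mul, mul_assoc]
          linarith
  have hlow : ∀ x : Cube d, 1/(2*(2:ℝ)^d) ≤ f x := by
    intro x
    have h := abs_le.mp (hbound x)
    have : 1/(2*(2:ℝ)^d) + 1/(2*(2:ℝ)^d) = 1/(2:ℝ)^d := by field_simp; ring
    linarith [h.1]
  have hhigh : ∀ x : Cube d, f x ≤ 3/(2*(2:ℝ)^d) := by
    intro x
    have h := abs_le.mp (hbound x)
    have e1 : 1/(2*(2:ℝ)^d) + 1/(2*(2:ℝ)^d) = 1/(2:ℝ)^d := by field_simp; ring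
    have e2 : 3/(2*(2:ℝ)^d) = 1/(2*(2:ℝ)^d) + 1/(2:ℝ)^d := by field_simp; ring
    linarith [h.2]
  -- density
  have hws : walsh z = fun _ => 1 / sq := funext fun x => walsh_zero_left x
  have hsum1 : ∑ x : Cube d, f x = 1 := by
    have hth : theta f z = (∑ x : Cube d, f x) * (1 / sq) := by
      rw [theta, ip, hws, ← Finset.sum_mul]
    have heq : (∑ x : Cube d, f x) * (1 / sq) = 1 * (1 / sq) := by
      rw [← hth, h0, one_mul]
    exact mul_right_cancel₀ (by positivity) heq
  -- the rearrangement
  have hcardfun : Fintype.card (Cube d) = 2 ^ d := by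
    simp [Fintype.card_fun]
  let ε : Fin (2 ^ d) ≃ Cube d := (Fintype.equivFinOfCardEq hcardfun).symm
  let v : Fin (2 ^ d) → ℝ := fun i => -|theta f (ε i)|
  let e : Fin (2 ^ d) ≃ Cube d := (Tuple.sort v).trans ε
  have hmono : ∀ i j : Fin (2 ^ d), i ≤ j → |theta f (e j)| ≤ |theta f (e i)| := by
    intro i j hij
    have h := Tuple.monotone_sort v hij
    simp only [Function.comp_apply, v] at h
    simp only [e, Equiv.trans_apply]
    linarith
  have hvle : ∀ s : Cube d, s ≠ z → |theta f s| ≤ a := by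
    intro s hs
    rcases hvals s hs with h | h | h
    · rw [h, abs_zero]; exact ha.le
    · rw [h, abs_of_pos ha]
    · rw [h, abs_neg, abs_of_pos ha]
  have ha1 : a ≤ 1 / sq := by
    have hk' : (1:ℝ) ≤ k := by exact_mod_cast hk1
    have : a ≤ (k:ℝ) * a := by nlinarith
    have h12 : 1 / (2 * sq) ≤ 1 / sq := by
      rw [div_le_div_iff₀ (by positivity) (by positivity)]; nlinarith
    linarith
  have hall : ∀ s : Cube d, |theta f s| ≤ 1 / sq := by
    intro s
    by_cases hs : s = z
    · rw [hs, h0, abs_of_pos (by positivity)]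
    · exact le_trans (hvle s hs) ha1
  have hma : ∀ m : Fin (2 ^ d), 1 ≤ m.val → |theta f (e m)| ≤ a := by
    intro m hm
    by_cases hez : e m = z
    · set i0 : Fin (2 ^ d) := ⟨0, by positivity⟩ with hi0
      have hne : e i0 ≠ z := by
        intro hc
        have : i0 = m := e.injective (hc.trans hez.symm)
        rw [hi0] at this
        have := congrArg Fin.val this
        simp at this
        omega
      exact le_trans (hmono i0 m (by simp [hi0, Fin.le_def])) (hvle _ hne)
    · exact hvle _ hez
  have hzero' : ∀ m : Fin (2 ^ d), k + 1 ≤ m.val → theta f (e m) = 0 := by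
    intro m hm
    by_contra hne
    have hpos : 0 < |theta f (e m)| := abs_pos.mpr hne
    have hsub2 : (Finset.Iic m).image e ⊆ insert z T := by
      intro s hs
      obtain ⟨i, hi, rfl⟩ := Finset.mem_image.mp hs
      have hi' : |theta f (e m)| ≤ |theta f (e i)| := hmono i m (Finset.mem_Iic.mp hi)
      have hn : theta f (e i) ≠ 0 := by
        intro h
        rw [h, abs_zero] at hi'
        linarith
      by_cases hez : e i = z
      · rw [hez]; exact Finset.mem_insert_self z T
      · exact Finset.mem_insert_of_mem (Finset.mem_filter.mpr ⟨Finset.mem_univ _, hez, hn⟩)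
    have hc1 : ((Finset.Iic m).image e).card = m.val + 1 := by
      rw [Finset.card_image_of_injective _ e.injective, Fin.card_Iic]
    have hc2 : (insert z T).card ≤ k + 1 := by
      refine le_trans (Finset.card_insert_le _ _) ?_
      rw [hT]
    have := Finset.card_le_card hsub2
    omega
  refine ⟨fun x => ⟨hlow x, hhigh x⟩, ⟨⟨e, hmono, ?_⟩, fun x => le_trans (by positivity) (hlow x), hsum1⟩⟩
  intro m
  rcases Nat.lt_or_ge m.val 1 with hm | hm
  · have hm0 : ((m.val : ℝ) + 1) = 1 := by
      have : m.val = 0 := by omega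
      rw [this]; norm_num
    rw [hm0, Real.one_rpow, mul_one]
    exact hall _
  rcases Nat.lt_or_ge m.val (k + 1) with hm2 | hm2
  · refine le_trans (hma m hm) (le_trans h2 ?_)
    refine mul_le_mul_of_nonneg_left ?_ (by positivity)
    refine Real.rpow_le_rpow_of_nonpos (by positivity) ?_ ?_
    · have : m.val ≤ k := by omega
      have : (m.val : ℝ) ≤ k := by exact_mod_cast this
      linarith
    · have : 0 < 1 / p := by positivity
      linarith
  · rw [hzero' m hm2, abs_zero]
    positivity

end RWT
end
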